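/- Let T = (V, A) be a tournament on n vertices and let F ⊆ V be a feedback vertex set of T with |F| = f. Then the number of distinct sets of the form N⁺(R), over all subsets R ⊆ V, is at most 4^f · (n − f + 1). -/
import Mathlib


open scoped Classical

/-- The out-neighborhood of a set `S` in the digraph with arc relation `A`. -/
noncomputable def Nplus {V : Type} [Fintype V] (A : V → V → Prop) (S : Finset V) : Finset V :=
  Finset.univ.filter (fun y => ∃ x ∈ S, A x y)

/-- The subdigraph induced by `S` is acyclic (loops count as cycles). -/
def AcyclicOn {V : Type} (A : V → V → Prop) (S : Finset V) : Prop :=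
  ∀ v ∈ S, ¬ Relation.TransGen (fun x y => x ∈ S ∧ y ∈ S ∧ A x y) v v

/-- A tournament: a loopless digraph with exactly one arc between every pair of
distinct vertices. -/
def IsTournament {V : Type} (A : V → V → Prop) : Prop :=
  (∀ v, ¬ A v v) ∧ ∀ u v : V, u ≠ v → (A u v ↔ ¬ A v u)

lemma card_image_le_of_factor {α β γ : Type*} [DecidableEq β] [DecidableEq γ]
    (s : Finset α) (f : α → β) (g : α → γ)
    (h : ∀ a ∈ s, ∀ b ∈ s, g a = g b → f a = f b) :
    (s.image f).card ≤ (s.image g).card := by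
  rcases s.eq_empty_or_nonempty with rfl | ⟨a0, ha0⟩
  · simp
  · apply Finset.card_le_card_of_surjOn
      (fun c => if hc : ∃ a ∈ s, g a = c then f hc.choose else f a0)
    intro b hb
    simp only [Finset.coe_image, Set.mem_image, Finset.mem_coe] at hb ⊢
    obtain ⟨a, ha, rfl⟩ := hb
    refine ⟨g a, ⟨a, ha, rfl⟩, ?_⟩
    have hc : ∃ a' ∈ s, g a' = g a := ⟨a, ha, rfl⟩
    rw [dif_pos hc]
    exact h _ hc.choose_spec.1 _ ha hc.choose_spec.2

/-- For a tournament `T` on `n` vertices with a feedback vertex set `F` of size `f`,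
the number of distinct sets of the form `N⁺(R)`, over the subsets `R` of the vertex
set, is at most `4^f · (n - f + 1)`. -/
theorem tournament_card_image_Nplus_le {V : Type} [Fintype V] [DecidableEq V]
    (A : V → V → Prop) (hT : IsTournament A)
    (F : Finset V) (hF : AcyclicOn A (Finset.univ \ F)) :
    ((Finset.univ : Finset (Finset V)).image (fun R => Nplus A R)).card ≤
      4 ^ F.card * (Fintype.card V - F.card + 1) := by
  obtain ⟨hirr, hconn⟩ := hT
  -- transitivity of A on `univ \ F`
  have htrans : ∀ a ∈ Finset.univ \ F, ∀ b ∈ Finset.univ \ F, ∀ c ∈ Finset.univ \ F,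
      A a b → A b c → A a c := by
    intro a ha b hb c hc hab hbc
    by_cases hac : a = c
    · subst hac
      exact absurd (Relation.TransGen.tail (Relation.TransGen.single
          ⟨ha, hb, hab⟩) ⟨hb, ha, hbc⟩) (hF a ha)
    · by_contra hn
      have hca : A c a := (hconn c a fun h => hac h.symm).mpr hn
      exact absurd (Relation.TransGen.tail (Relation.TransGen.tail
          (Relation.TransGen.single ⟨ha, hb, hab⟩) ⟨hb, hc, hbc⟩) ⟨hc, ha, hca⟩) (hF a ha)
  -- the sets `Nplus A S \ F` for `S ⊆ univ \ F` form a chain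
  have hchain : ∀ S ⊆ Finset.univ \ F, ∀ S' ⊆ Finset.univ \ F,
      Nplus A S \ F ⊆ Nplus A S' \ F ∨ Nplus A S' \ F ⊆ Nplus A S \ F := by
    intro S hS S' hS'
    by_cases hsub : Nplus A S \ F ⊆ Nplus A S' \ F
    · exact Or.inl hsub
    · right
      rw [Finset.not_subset] at hsub
      obtain ⟨y, hy, hy'⟩ := hsub
      rw [Finset.mem_sdiff] at hy
      obtain ⟨hyN, hyF⟩ := hy
      rw [Nplus, Finset.mem_filter] at hyN
      obtain ⟨-, x, hxS, hxy⟩ := hyN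
      have hyW : y ∈ Finset.univ \ F := Finset.mem_sdiff.mpr ⟨Finset.mem_univ y, hyF⟩
      have hynot : ∀ u ∈ S', ¬ A u y := by
        intro u hu hA
        exact hy' (Finset.mem_sdiff.mpr
          ⟨Finset.mem_filter.mpr ⟨Finset.mem_univ y, u, hu, hA⟩, hyF⟩)
      intro z hz
      rw [Finset.mem_sdiff] at hz
      obtain ⟨hzN, hzF⟩ := hz
      rw [Nplus, Finset.mem_filter] at hzN
      obtain ⟨-, x', hx'S, hx'z⟩ := hzN
      have hzW : z ∈ Finset.univ \ F := Finset.mem_sdiff.mpr ⟨Finset.mem_univ z, hzF⟩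
      have hxz : A x z := by
        by_cases hxy' : x' = y
        · exact htrans x (hS hxS) y hyW z hzW hxy (hxy' ▸ hx'z)
        · have hyx' : A y x' := (hconn y x' (Ne.symm hxy')).mpr (hynot x' hx'S)
          have hxx' : A x x' := htrans x (hS hxS) y hyW x' (hS' hx'S) hxy hyx'
          exact htrans x (hS hxS) x' (hS' hx'S) z hzW hxx' hx'z
      exact Finset.mem_sdiff.mpr
        ⟨Finset.mem_filter.mpr ⟨Finset.mem_univ z, x, hxS, hxz⟩, hzF⟩
  -- decomposition of Nplus
  have hdecomp : ∀ R : Finset V, Nplus A R =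
      (Nplus A R ∩ F) ∪ ((Nplus A (R ∩ F) \ F) ∪ (Nplus A (R \ F) \ F)) := by
    intro R
    ext y
    simp only [Nplus, Finset.mem_union, Finset.mem_inter, Finset.mem_sdiff,
      Finset.mem_filter, Finset.mem_univ, true_and]
    constructor
    · rintro ⟨x, hx, hA⟩
      by_cases hyF : y ∈ F
      · exact Or.inl ⟨⟨x, hx, hA⟩, hyF⟩
      · by_cases hxF : x ∈ F
        · exact Or.inr (Or.inl ⟨⟨x, ⟨hx, hxF⟩, hA⟩, hyF⟩)
        · exact Or.inr (Or.inr ⟨⟨x, ⟨hx, hxF⟩, hA⟩, hyF⟩)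
    · rintro (⟨⟨x, hx, hA⟩, -⟩ | ⟨⟨x, ⟨hx, -⟩, hA⟩, -⟩ | ⟨⟨x, ⟨hx, -⟩, hA⟩, -⟩)
      exacts [⟨x, hx, hA⟩, ⟨x, hx, hA⟩, ⟨x, hx, hA⟩]
  set g : Finset V → Finset V × Finset V × ℕ :=
    fun R => (R ∩ F, Nplus A R ∩ F, (Nplus A (R \ F) \ F).card) with hg
  have key : ∀ R R' : Finset V, g R = g R' → Nplus A R = Nplus A R' := by
    intro R R' h
    rw [hg] at h
    simp only [Prod.mk.injEq] at h
    obtain ⟨h1, h2, h3⟩ := h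
    have hsub : R \ F ⊆ Finset.univ \ F :=
      Finset.sdiff_subset_sdiff (Finset.subset_univ _) le_rfl
    have hsub' : R' \ F ⊆ Finset.univ \ F :=
      Finset.sdiff_subset_sdiff (Finset.subset_univ _) le_rfl
    have heq : Nplus A (R \ F) \ F = Nplus A (R' \ F) \ F := by
      rcases hchain _ hsub _ hsub' with hc | hc
      · exact Finset.eq_of_subset_of_card_le hc (le_of_eq h3.symm)
      · exact (Finset.eq_of_subset_of_card_le hc (le_of_eq h3)).symm
    rw [hdecomp R, hdecomp R', h1, h2, heq]
  have hb1 : ((Finset.univ : Finset (Finset V)).image (fun R => Nplus A R)).card ≤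
      ((Finset.univ : Finset (Finset V)).image g).card :=
    card_image_le_of_factor _ _ _ (fun a _ b _ h => key a b h)
  have hb2 : (Finset.univ : Finset (Finset V)).image g ⊆
      F.powerset ×ˢ (F.powerset ×ˢ Finset.range (Fintype.card V - F.card + 1)) := by
    intro p hp
    simp only [Finset.mem_image] at hp
    obtain ⟨R, -, rfl⟩ := hp
    simp only [hg, Finset.mem_product, Finset.mem_powerset, Finset.mem_range]
    refine ⟨Finset.inter_subset_right, Finset.inter_subset_right, ?_⟩
    have hsub : Nplus A (R \ F) \ F ⊆ Finset.univ \ F :=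
      Finset.sdiff_subset_sdiff (Finset.subset_univ _) le_rfl
    have : (Nplus A (R \ F) \ F).card ≤ Fintype.card V - F.card := by
      calc (Nplus A (R \ F) \ F).card ≤ (Finset.univ \ F).card :=
            Finset.card_le_card hsub
        _ = Fintype.card V - F.card := by
            rw [Finset.card_sdiff_of_subset (Finset.subset_univ F), Finset.card_univ]
    omega
  calc ((Finset.univ : Finset (Finset V)).image (fun R => Nplus A R)).card
      ≤ ((Finset.univ : Finset (Finset V)).image g).card := hb1
    _ ≤ (F.powerset ×ˢ (F.powerset ×ˢ Finset.range (Fintype.card V - F.card + 1))).card :=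
        Finset.card_le_card hb2
    _ = 4 ^ F.card * (Fintype.card V - F.card + 1) := by
        rw [Finset.card_product, Finset.card_product, Finset.card_powerset,
          Finset.card_range, show (4:ℕ) = 2 * 2 from rfl, mul_pow]
        ring
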